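/- Let f = f_μ, let Z ∈ ℝ^{m×n}, let δ ∈ [0,1), and define C_Z(X) = R(X) + ‖X − Z‖_F². If X̄ minimizes C_Z over { X : rank(X) ≤ k } with rank(X̄) < k, and no singular value of Z lies in the interval [(1−δ)√μ, √μ/(1−δ)], then X̄ minimizes C_Z over all of ℝ^{m×n}. -/

import Mathlib

noncomputable section
open Matrix Real

/-- The singular values of a real `m × n` matrix, in descending order,
indexed by `Fin (min m n)`: square roots of the eigenvalues of `Xᴴ * X`. -/
def sVal {m n : ℕ} (X : Matrix (Fin m) (Fin n) ℝ) (i : Fin (min m n)) : ℝ :=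
  Real.sqrt ((Matrix.isHermitian_conjTranspose_mul_self X).eigenvalues
    (Tuple.sort (fun j => -(Matrix.isHermitian_conjTranspose_mul_self X).eigenvalues j)
      (Fin.castLE (Nat.min_le_right m n) i)))

def regR {m n : ℕ} (f : ℝ → ℝ) (X : Matrix (Fin m) (Fin n) ℝ) : ℝ :=
  ∑ i, f (sVal X i)

def colNormSq {m k : ℕ} (B : Matrix (Fin m) (Fin k) ℝ) (i : Fin k) : ℝ :=
  ∑ j, (B j i) ^ 2

def colNorm {m k : ℕ} (B : Matrix (Fin m) (Fin k) ℝ) (i : Fin k) : ℝ :=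
  Real.sqrt (colNormSq B i)

def Rt {m n k : ℕ} (f : ℝ → ℝ) (B : Matrix (Fin m) (Fin k) ℝ)
    (C : Matrix (Fin n) (Fin k) ℝ) : ℝ :=
  ∑ i, f ((colNormSq B i + colNormSq C i) / 2)

/-- Frobenius inner product `⟨X,Y⟩ = tr(XᵀY)`. -/
def frobInner {m n : ℕ} (X Y : Matrix (Fin m) (Fin n) ℝ) : ℝ :=
  (Xᵀ * Y).trace

def frobSq {m n : ℕ} (X : Matrix (Fin m) (Fin n) ℝ) : ℝ :=
  (Xᵀ * X).trace

def fmu (μ x : ℝ) : ℝ := μ - max (Real.sqrt μ - x) 0 ^ 2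



lemma fmu_zero {μ : ℝ} (hμ : 0 ≤ μ) : fmu μ 0 = 0 := by
  simp [fmu, max_eq_left (Real.sqrt_nonneg μ), Real.sq_sqrt hμ]

lemma fmu_le {μ x : ℝ} : fmu μ x ≤ μ := by
  nlinarith [sq_nonneg (max (Real.sqrt μ - x) 0), fmu.eq_1 μ x]

variable {m n : ℕ} (X : Matrix (Fin m) (Fin n) ℝ)

lemma eig_nonneg (j : Fin n) :
    0 ≤ (Matrix.isHermitian_conjTranspose_mul_self X).eigenvalues j := by
  exact (Matrix.posSemidef_conjTranspose_mul_self X).eigenvalues_nonneg j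

lemma eig_card :
    Fintype.card {j // (Matrix.isHermitian_conjTranspose_mul_self X).eigenvalues j ≠ 0} = X.rank := by
  rw [← (Matrix.isHermitian_conjTranspose_mul_self X).rank_eq_card_non_zero_eigs,
    Matrix.rank_conjTranspose_mul_self]

lemma rank_le_min : X.rank ≤ min m n := by
  refine le_min ?_ ?_
  · simpa using X.rank_le_card_height
  · simpa using X.rank_le_card_width

lemma tail_zero (j : Fin n) (hj : X.rank ≤ (j : ℕ)) :
    (Matrix.isHermitian_conjTranspose_mul_self X).eigenvalues
      (Tuple.sort (fun j => -(Matrix.isHermitian_conjTranspose_mul_self X).eigenvalues j) j) = 0 := by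
  set e := (Matrix.isHermitian_conjTranspose_mul_self X).eigenvalues with he
  set σ := Tuple.sort (fun j => -e j) with hσ
  by_contra h
  have hpos : 0 < e (σ j) := lt_of_le_of_ne (eig_nonneg X _) (Ne.symm h)
  have hmono : Monotone ((fun j => -e j) ∘ σ) := Tuple.monotone_sort _
  have hsub : (Finset.Iic j).image σ ⊆ Finset.univ.filter (fun i => e i ≠ 0) := by
    intro x hx
    obtain ⟨i, hi, rfl⟩ := Finset.mem_image.1 hx
    have : -e (σ i) ≤ -e (σ j) := hmono (Finset.mem_Iic.1 hi)
    simp only [Finset.mem_filter, Finset.mem_univ, true_and]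
    intro h0
    rw [h0] at this
    linarith
  have hcard := Finset.card_le_card hsub
  rw [Finset.card_image_of_injective _ σ.injective, Fin.card_Iic] at hcard
  have : (Finset.univ.filter (fun i => e i ≠ 0)).card = X.rank := by
    rw [← eig_card X]; exact (Fintype.card_subtype _).symm
  omega

lemma sVal_tail (i : Fin (min m n)) (hi : X.rank ≤ (i : ℕ)) : sVal X i = 0 := by
  rw [sVal, tail_zero X _ (by simpa using hi), Real.sqrt_zero]

lemma regR_eq {μ : ℝ} (hμ : 0 ≤ μ) :
    regR (fmu μ) X = ∑ j : Fin n,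
      fmu μ (Real.sqrt ((Matrix.isHermitian_conjTranspose_mul_self X).eigenvalues j)) := by
  set e := (Matrix.isHermitian_conjTranspose_mul_self X).eigenvalues with he
  set σ := Tuple.sort (fun j => -e j) with hσ
  have h1 : ∑ j : Fin n, fmu μ (Real.sqrt (e j)) = ∑ j : Fin n, fmu μ (Real.sqrt (e (σ j))) :=
    (Equiv.sum_comp σ (fun j => fmu μ (Real.sqrt (e j)))).symm
  rw [regR]
  rw [h1]
  have h2 : ∑ i : Fin (min m n), fmu μ (sVal X i)
      = ∑ j ∈ Finset.univ.map (Fin.castLEEmb (Nat.min_le_right m n)),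
          fmu μ (Real.sqrt (e (σ j))) := by
    rw [Finset.sum_map]
    rfl
  rw [h2]
  refine Finset.sum_subset (Finset.subset_univ _) ?_
  intro j _ hj
  have hjge : min m n ≤ (j : ℕ) := by
    by_contra hlt
    push_neg at hlt
    exact hj (Finset.mem_map.2 ⟨⟨(j : ℕ), hlt⟩, Finset.mem_univ _, by
      simp [Fin.castLEEmb]⟩)
  have h0 : e (σ j) = 0 := tail_zero X j (le_trans (rank_le_min X) hjge)
  rw [h0, Real.sqrt_zero, fmu_zero hμ]

lemma regR_le_rank {μ : ℝ} (hμ : 0 ≤ μ) : regR (fmu μ) X ≤ μ * X.rank := by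
  have h1 : regR (fmu μ) X ≤ ∑ i : Fin (min m n), (if (i : ℕ) < X.rank then μ else 0) := by
    refine Finset.sum_le_sum fun i _ => ?_
    split
    · exact fmu_le
    · next h => rw [sVal_tail X i (by omega), fmu_zero hμ]
  refine h1.trans ?_
  have h2 : ∑ i : Fin (min m n), (if (i : ℕ) < X.rank then μ else 0)
      = ((Finset.univ.filter fun i : Fin (min m n) => (i : ℕ) < X.rank).card : ℝ) * μ := by
    rw [Finset.sum_ite, Finset.sum_const, Finset.sum_const]
    simp [mul_comm]
  rw [h2]
  have h3 : (Finset.univ.filter fun i : Fin (min m n) => (i : ℕ) < X.rank).card ≤ X.rank := by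
    have := Finset.card_le_card_of_injOn (fun i : Fin (min m n) => (i : ℕ))
      (s := Finset.univ.filter fun i : Fin (min m n) => (i : ℕ) < X.rank)
      (t := Finset.range X.rank)
      (fun i hi => Finset.mem_range.2 (Finset.mem_filter.1 hi).2)
      (fun a _ b _ h => Fin.val_injective h)
    simpa using this
  have := mul_le_mul_of_nonneg_left (Nat.cast_le.2 h3 : ((Finset.univ.filter
    fun i : Fin (min m n) => (i : ℕ) < X.rank).card : ℝ) ≤ X.rank) hμ
  linarith

lemma unit_facts {A : Matrix (Fin n) (Fin n) ℝ} (hA : A.IsHermitian) :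
    (hA.eigenvectorUnitary : Matrix (Fin n) (Fin n) ℝ)ᵀ *
      (hA.eigenvectorUnitary : Matrix (Fin n) (Fin n) ℝ) = 1 ∧
    (hA.eigenvectorUnitary : Matrix (Fin n) (Fin n) ℝ) *
      (hA.eigenvectorUnitary : Matrix (Fin n) (Fin n) ℝ)ᵀ = 1 := by
  have h1 : star (hA.eigenvectorUnitary : Matrix (Fin n) (Fin n) ℝ) * (hA.eigenvectorUnitary : Matrix (Fin n) (Fin n) ℝ) = 1 := Unitary.coe_star_mul_self hA.eigenvectorUnitary
  have h2 : (hA.eigenvectorUnitary : Matrix (Fin n) (Fin n) ℝ) * star (hA.eigenvectorUnitary : Matrix (Fin n) (Fin n) ℝ) = 1 := Unitary.coe_mul_star_self hA.eigenvectorUnitary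
  constructor
  · simpa [Matrix.star_eq_conjTranspose, conjTranspose_eq_transpose_of_trivial] using h1
  · simpa [Matrix.star_eq_conjTranspose, conjTranspose_eq_transpose_of_trivial] using h2

lemma spectral_real {A : Matrix (Fin n) (Fin n) ℝ} (hA : A.IsHermitian) :
    (hA.eigenvectorUnitary : Matrix (Fin n) (Fin n) ℝ)ᵀ * A *
      (hA.eigenvectorUnitary : Matrix (Fin n) (Fin n) ℝ) = diagonal hA.eigenvalues := by
  have := hA.conjStarAlgAut_star_eigenvectorUnitary
  simpa [Unitary.conjStarAlgAut_apply, Matrix.star_eq_conjTranspose,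
    conjTranspose_eq_transpose_of_trivial] using this

lemma young {μ a b : ℝ} (hμ : 0 ≤ μ) (ha : 0 ≤ a) (hb : 0 ≤ b) :
    2 * (a * b) ≤ fmu μ a + a ^ 2 + max (b ^ 2 - μ) 0 := by
  have hs : Real.sqrt μ ^ 2 = μ := Real.sq_sqrt hμ
  have hsn : 0 ≤ Real.sqrt μ := Real.sqrt_nonneg μ
  rcases le_or_gt (Real.sqrt μ) a with h | h
  · have h1 : fmu μ a = μ := by
      simp [fmu, max_eq_right (by linarith : Real.sqrt μ - a ≤ 0)]
    have h2 : b ^ 2 - μ ≤ max (b ^ 2 - μ) 0 := le_max_left _ _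
    nlinarith [sq_nonneg (a - b)]
  · have h1 : fmu μ a = 2 * Real.sqrt μ * a - a ^ 2 := by
      rw [fmu, max_eq_left (by linarith : (0:ℝ) ≤ Real.sqrt μ - a)]; nlinarith
    rcases le_or_gt b (Real.sqrt μ) with h2 | h2
    · have h3 : (0:ℝ) ≤ max (b ^ 2 - μ) 0 := le_max_right _ _
      nlinarith
    · have h3 : b ^ 2 - μ ≤ max (b ^ 2 - μ) 0 := le_max_left _ _
      nlinarith

lemma max_shift {μ θ x : ℝ} (h : μ ≤ θ) : max (x - μ) 0 ≤ (θ - μ) + max (x - θ) 0 := by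
  rcases le_total x θ with h1 | h1
  · rcases le_total x μ with h2 | h2 <;> simp [max_def] <;> split <;> nlinarith
  · simp [max_def]; split <;> split <;> nlinarith

lemma jensen_max {n : ℕ} (c d : Fin n → ℝ) (hc : ∀ i, 0 ≤ c i) :
    max (∑ i, c i * d i) 0 ≤ ∑ i, c i * max (d i) 0 := by
  apply max_le
  · exact Finset.sum_le_sum fun i _ => mul_le_mul_of_nonneg_left (le_max_left _ _) (hc i)
  · exact Finset.sum_nonneg fun i _ => mul_nonneg (hc i) (le_max_right _ _)

section Core
variable {m n : ℕ}

lemma master_core (μ θ : ℝ) (hμ : 0 ≤ μ) (hθ : μ ≤ θ)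
    (Z X : Matrix (Fin m) (Fin n) ℝ) (V W : Matrix (Fin n) (Fin n) ℝ) (lam e : Fin n → ℝ)
    (hV1 : Vᵀ * V = 1) (hV2 : V * Vᵀ = 1) (hW1 : Wᵀ * W = 1) (hW2 : W * Wᵀ = 1)
    (hsX : Vᵀ * (Xᵀ * X) * V = diagonal e) (hsZ : Wᵀ * (Zᵀ * Z) * W = diagonal lam)
    (he0 : ∀ j, 0 ≤ e j)
    (hreg : regR (fmu μ) X = ∑ j, fmu μ (Real.sqrt (e j)))
    (hcard : ((Finset.univ.filter fun j => e j ≠ 0).card : ℕ) ≤ X.rank) :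
    ∑ i, lam i - (X.rank : ℝ) * (θ - μ) - ∑ i, max (lam i - θ) 0
      ≤ regR (fmu μ) X + frobSq (X - Z) := by
  have trace_conj : ∀ (U : Matrix (Fin n) (Fin n) ℝ) (M : Matrix (Fin n) (Fin n) ℝ),
      U * Uᵀ = 1 → (Uᵀ * M * U).trace = M.trace := by
    intro U M hU
    rw [Matrix.trace_mul_cycle, hU, Matrix.one_mul]
  have hsZ' : Zᵀ * Z = W * diagonal lam * Wᵀ := by
    rw [← hsZ]
    calc Zᵀ * Z = (W * Wᵀ) * (Zᵀ * Z) * (W * Wᵀ) := by rw [hW2, Matrix.one_mul, Matrix.mul_one]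
      _ = W * (Wᵀ * (Zᵀ * Z) * W) * Wᵀ := by simp only [Matrix.mul_assoc]
  set P := X * V with hP
  set Q := Z * V with hQ
  set O := Wᵀ * V with hO
  have hPtP : Pᵀ * P = diagonal e := by
    rw [hP, Matrix.transpose_mul, ← hsX]; simp only [Matrix.mul_assoc]
  have hQtQ : Qᵀ * Q = Oᵀ * (diagonal lam * O) := by
    rw [hQ, hO, Matrix.transpose_mul, Matrix.transpose_mul, Matrix.transpose_transpose]
    calc Vᵀ * Zᵀ * (Z * V) = Vᵀ * (Zᵀ * Z) * V := by simp only [Matrix.mul_assoc]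
      _ = Vᵀ * (W * diagonal lam * Wᵀ) * V := by rw [hsZ']
      _ = Vᵀ * W * (diagonal lam * (Wᵀ * V)) := by simp only [Matrix.mul_assoc]
  have hOtO : Oᵀ * O = 1 := by
    rw [hO, Matrix.transpose_mul, Matrix.transpose_transpose]
    calc Vᵀ * W * (Wᵀ * V) = Vᵀ * (W * Wᵀ) * V := by simp only [Matrix.mul_assoc]
      _ = 1 := by rw [hW2, Matrix.mul_one, hV1]
  have hOOt : O * Oᵀ = 1 := by
    rw [hO, Matrix.transpose_mul, Matrix.transpose_transpose]
    calc Wᵀ * V * (Vᵀ * W) = Wᵀ * (V * Vᵀ) * W := by simp only [Matrix.mul_assoc]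
      _ = 1 := by rw [hV2, Matrix.mul_one, hW1]
  -- column quantities
  set c : Fin n → Fin n → ℝ := fun i j => (O i j) ^ 2 with hc
  set d : Fin n → ℝ := fun j => ∑ l, P l j * Q l j with hd
  set b2 : Fin n → ℝ := fun j => ∑ l, (Q l j) ^ 2 with hb2
  have hPcol : ∀ j, ∑ l, (P l j) ^ 2 = e j := by
    intro j
    have h1 : (Pᵀ * P) j j = diagonal e j j := by rw [hPtP]
    simpa [Matrix.mul_apply, Matrix.transpose_apply, Matrix.diagonal_apply_eq, pow_two]
      using h1
  have hQcol : ∀ j, b2 j = ∑ i, lam i * c i j := by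
    intro j
    have h1 : (Qᵀ * Q) j j = (Oᵀ * (diagonal lam * O)) j j := by rw [hQtQ]
    have h2 : (Qᵀ * Q) j j = b2 j := by
      simp [Matrix.mul_apply, Matrix.transpose_apply, hb2, pow_two]
    have h3 : (Oᵀ * (diagonal lam * O)) j j = ∑ i, lam i * c i j := by
      simp only [Matrix.mul_apply, Matrix.transpose_apply, Matrix.diagonal_apply, ite_mul,
        zero_mul, Finset.sum_ite_eq, Finset.mem_univ, if_true, hc]
      exact Finset.sum_congr rfl fun i _ => by ring
    rw [← h2, h1, h3]
  have hColSum : ∀ j, ∑ i, c i j = 1 := by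
    intro j
    have h1 : (Oᵀ * O) j j = (1 : Matrix (Fin n) (Fin n) ℝ) j j := by rw [hOtO]
    simpa [Matrix.mul_apply, Matrix.transpose_apply, Matrix.one_apply, hc, pow_two] using h1
  have hRowSum : ∀ i, ∑ j, c i j = 1 := by
    intro i
    have h1 : (O * Oᵀ) i i = (1 : Matrix (Fin n) (Fin n) ℝ) i i := by rw [hOOt]
    simpa [Matrix.mul_apply, Matrix.transpose_apply, Matrix.one_apply, hc, pow_two] using h1
  have hcnn : ∀ i j, 0 ≤ c i j := fun i j => sq_nonneg _
  -- trace identities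
  have htrX : frobSq X = ∑ j, e j := by
    rw [frobSq, ← trace_conj V (Xᵀ * X) hV2, hsX, Matrix.trace_diagonal]
  have htrZ : frobSq Z = ∑ i, lam i := by
    rw [frobSq, ← trace_conj W (Zᵀ * Z) hW2, hsZ, Matrix.trace_diagonal]
  have htrXZ : frobInner X Z = ∑ j, d j := by
    have h1 : Pᵀ * Q = Vᵀ * (Xᵀ * Z) * V := by
      rw [hP, hQ, Matrix.transpose_mul]; simp only [Matrix.mul_assoc]
    have h2 : frobInner X Z = (Pᵀ * Q).trace := by
      rw [frobInner, h1, trace_conj V (Xᵀ * Z) hV2]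
    rw [h2, Matrix.trace]
    refine Finset.sum_congr rfl fun j _ => ?_
    simp [Matrix.diag, Matrix.mul_apply, Matrix.transpose_apply, hd]
  have hfrobsub : frobSq (X - Z) = frobSq X - 2 * frobInner X Z + frobSq Z := by
    have h1 : (X - Z)ᵀ * (X - Z) = (Xᵀ * X - Xᵀ * Z) - (Zᵀ * X - Zᵀ * Z) := by
      rw [Matrix.transpose_sub, Matrix.sub_mul, Matrix.mul_sub, Matrix.mul_sub]
    have h2 : (Zᵀ * X).trace = (Xᵀ * Z).trace := by
      rw [← Matrix.trace_transpose, Matrix.transpose_mul, Matrix.transpose_transpose]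
    rw [frobSq, frobSq, frobSq, frobInner, h1]
    rw [Matrix.trace_sub, Matrix.trace_sub, Matrix.trace_sub, h2]
    ring
  -- per-column lower bound
  have hperj : ∀ j,
      -(if e j = 0 then 0 else (θ - μ) + max ((∑ i, lam i * c i j) - θ) 0)
        ≤ fmu μ (Real.sqrt (e j)) + e j - 2 * d j := by
    intro j
    by_cases hej : e j = 0
    · have hP0 : ∀ l, P l j = 0 := by
        intro l
        have h1 : ∑ l, (P l j) ^ 2 = 0 := by rw [hPcol j, hej]
        have h2 := (Finset.sum_eq_zero_iff_of_nonneg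
          (fun l _ => sq_nonneg (P l j))).1 h1 l (Finset.mem_univ l)
        exact sq_eq_zero_iff.mp h2
      have hd0 : d j = 0 := by
        rw [hd]; exact Finset.sum_eq_zero fun l _ => by rw [hP0 l, zero_mul]
      rw [if_pos hej, hej, hd0, Real.sqrt_zero, fmu_zero hμ]
      norm_num
    · rw [if_neg hej]
      have hejpos : 0 < e j := lt_of_le_of_ne (he0 j) (Ne.symm hej)
      set a := Real.sqrt (e j) with ha
      set b := Real.sqrt (b2 j) with hb
      have hb2nn : 0 ≤ b2 j := Finset.sum_nonneg fun l _ => sq_nonneg _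
      have ha2 : a ^ 2 = e j := Real.sq_sqrt (le_of_lt hejpos)
      have hb2' : b ^ 2 = b2 j := Real.sq_sqrt hb2nn
      have hann : 0 ≤ a := Real.sqrt_nonneg _
      have hbnn : 0 ≤ b := Real.sqrt_nonneg _
      have hCS : (d j) ^ 2 ≤ (a * b) ^ 2 := by
        have := Finset.sum_mul_sq_le_sq_mul_sq Finset.univ (fun l => P l j) (fun l => Q l j)
        calc (d j) ^ 2 ≤ (∑ l, (P l j) ^ 2) * ∑ l, (Q l j) ^ 2 := this
          _ = (a * b) ^ 2 := by rw [hPcol j, mul_pow, ha2, hb2']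
      have hdab : d j ≤ a * b := by nlinarith [mul_nonneg hann hbnn]
      have hyoung := young (μ := μ) hμ hann hbnn
      have hshift := max_shift (μ := μ) (θ := θ) (x := b ^ 2) hθ
      rw [hb2', hQcol j] at hshift hyoung
      linarith [hyoung, hshift, hdab, ha2]
  -- sum the per-column bounds
  have hsum1 : ∑ j, (fmu μ (Real.sqrt (e j)) + e j - 2 * d j)
      ≥ -∑ j, (if e j = 0 then 0 else (θ - μ) + max ((∑ i, lam i * c i j) - θ) 0) := by
    rw [← Finset.sum_neg_distrib]
    exact Finset.sum_le_sum fun j _ => hperj j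
  have hsum2 : ∑ j, (if e j = 0 then (0:ℝ) else (θ - μ) + max ((∑ i, lam i * c i j) - θ) 0)
      ≤ (X.rank : ℝ) * (θ - μ) + ∑ i, max (lam i - θ) 0 := by
    have step1 : ∀ j, (if e j = 0 then (0:ℝ) else (θ - μ) + max ((∑ i, lam i * c i j) - θ) 0)
        ≤ (if e j = 0 then (0:ℝ) else (θ - μ)) + max ((∑ i, lam i * c i j) - θ) 0 := by
      intro j
      by_cases hej : e j = 0
      · simp [hej, le_max_right]
      · simp [hej]
    have step2 : ∑ j, (if e j = 0 then (0:ℝ) else (θ - μ))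
        ≤ (X.rank : ℝ) * (θ - μ) := by
      have h1 : ∑ j, (if e j = 0 then (0:ℝ) else (θ - μ))
          = ((Finset.univ.filter fun j => e j ≠ 0).card : ℝ) * (θ - μ) := by
        rw [Finset.sum_ite, Finset.sum_const, Finset.sum_const]
        simp only [smul_eq_mul, mul_zero, mul_comm]
        have : (Finset.univ.filter fun j => ¬ e j = 0) = (Finset.univ.filter fun j => e j ≠ 0) :=
          rfl
        rw [this]
        ring
      rw [h1]
      exact mul_le_mul_of_nonneg_right (by exact_mod_cast hcard) (by linarith)
    have step3 : ∑ j, max ((∑ i, lam i * c i j) - θ) 0 ≤ ∑ i, max (lam i - θ) 0 := by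
      have perj : ∀ j, max ((∑ i, lam i * c i j) - θ) 0 ≤ ∑ i, c i j * max (lam i - θ) 0 := by
        intro j
        have h1 : (∑ i, lam i * c i j) - θ = ∑ i, c i j * (lam i - θ) := by
          have h0 := hColSum j
          calc (∑ i, lam i * c i j) - θ
              = (∑ i, lam i * c i j) - θ * ∑ i, c i j := by rw [h0, mul_one]
            _ = ∑ i, (lam i * c i j - θ * c i j) := by
                rw [Finset.mul_sum, ← Finset.sum_sub_distrib]
            _ = ∑ i, c i j * (lam i - θ) := Finset.sum_congr rfl fun i _ => by ring
        rw [h1]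
        exact jensen_max (fun i => c i j) (fun i => lam i - θ) (fun i => hcnn i j)
      calc ∑ j, max ((∑ i, lam i * c i j) - θ) 0
          ≤ ∑ j, ∑ i, c i j * max (lam i - θ) 0 := Finset.sum_le_sum fun j _ => perj j
        _ = ∑ i, (∑ j, c i j) * max (lam i - θ) 0 := by
            rw [Finset.sum_comm]
            exact Finset.sum_congr rfl fun i _ => by rw [Finset.sum_mul]
        _ = ∑ i, max (lam i - θ) 0 := by
            exact Finset.sum_congr rfl fun i _ => by rw [hRowSum i, one_mul]
    calc ∑ j, (if e j = 0 then (0:ℝ) else (θ - μ) + max ((∑ i, lam i * c i j) - θ) 0)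
        ≤ ∑ j, ((if e j = 0 then (0:ℝ) else (θ - μ)) + max ((∑ i, lam i * c i j) - θ) 0) :=
          Finset.sum_le_sum fun j _ => step1 j
      _ = (∑ j, (if e j = 0 then (0:ℝ) else (θ - μ))) + ∑ j, max ((∑ i, lam i * c i j) - θ) 0 :=
          Finset.sum_add_distrib
      _ ≤ (X.rank : ℝ) * (θ - μ) + ∑ i, max (lam i - θ) 0 := add_le_add step2 step3
  -- assemble
  have hmain : regR (fmu μ) X + frobSq (X - Z)
      = ∑ j, (fmu μ (Real.sqrt (e j)) + e j - 2 * d j) + ∑ i, lam i := by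
    have hsplit : ∑ j, (fmu μ (Real.sqrt (e j)) + e j - 2 * d j)
        = ∑ j, fmu μ (Real.sqrt (e j)) + ∑ j, e j - 2 * ∑ j, d j := by
      rw [Finset.sum_sub_distrib, Finset.sum_add_distrib, Finset.mul_sum]
    rw [hreg, hfrobsub, htrX, htrZ, htrXZ, hsplit]
    ring
  rw [hmain]
  linarith [hsum1, hsum2]

end Core

section Rest
variable {m n : ℕ}

lemma master (μ θ : ℝ) (hμ : 0 ≤ μ) (hθ : μ ≤ θ) (Z X : Matrix (Fin m) (Fin n) ℝ) :
    ∑ i, (Matrix.isHermitian_conjTranspose_mul_self Z).eigenvalues i - (X.rank : ℝ) * (θ - μ)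
      - ∑ i, max ((Matrix.isHermitian_conjTranspose_mul_self Z).eigenvalues i - θ) 0
    ≤ regR (fmu μ) X + frobSq (X - Z) := by
  obtain ⟨hW1, hW2⟩ := unit_facts (Matrix.isHermitian_conjTranspose_mul_self Z)
  obtain ⟨hV1, hV2⟩ := unit_facts (Matrix.isHermitian_conjTranspose_mul_self X)
  have hsZ : ((Matrix.isHermitian_conjTranspose_mul_self Z).eigenvectorUnitary :
        Matrix (Fin n) (Fin n) ℝ)ᵀ * (Zᵀ * Z) *
      ((Matrix.isHermitian_conjTranspose_mul_self Z).eigenvectorUnitary : Matrix (Fin n) (Fin n) ℝ)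
      = diagonal (Matrix.isHermitian_conjTranspose_mul_self Z).eigenvalues := by
    have h := spectral_real (Matrix.isHermitian_conjTranspose_mul_self Z)
    rw [show Zᵀ * Z = Zᴴ * Z by rw [conjTranspose_eq_transpose_of_trivial]]
    exact h
  have hsX : ((Matrix.isHermitian_conjTranspose_mul_self X).eigenvectorUnitary :
        Matrix (Fin n) (Fin n) ℝ)ᵀ * (Xᵀ * X) *
      ((Matrix.isHermitian_conjTranspose_mul_self X).eigenvectorUnitary : Matrix (Fin n) (Fin n) ℝ)
      = diagonal (Matrix.isHermitian_conjTranspose_mul_self X).eigenvalues := by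
    have h := spectral_real (Matrix.isHermitian_conjTranspose_mul_self X)
    rw [show Xᵀ * X = Xᴴ * X by rw [conjTranspose_eq_transpose_of_trivial]]
    exact h
  have hcard : ((Finset.univ.filter fun j =>
      (Matrix.isHermitian_conjTranspose_mul_self X).eigenvalues j ≠ 0).card : ℕ) ≤ X.rank := by
    rw [← eig_card X, Fintype.card_subtype]
  exact master_core μ θ hμ hθ Z X _ _ _ _ hV1 hV2 hW1 hW2 hsX hsZ
    (eig_nonneg X) (regR_eq X hμ) hcard

lemma candidate (μ : ℝ) (hμ : 0 ≤ μ) (Z : Matrix (Fin m) (Fin n) ℝ) (T : Finset (Fin n)) :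
    ∃ Y : Matrix (Fin m) (Fin n) ℝ, Y.rank ≤ T.card ∧
      regR (fmu μ) Y + frobSq (Y - Z) ≤ μ * T.card + ∑ i ∈ Finset.univ \ T,
        (Matrix.isHermitian_conjTranspose_mul_self Z).eigenvalues i := by
  obtain ⟨hW1, hW2⟩ := unit_facts (Matrix.isHermitian_conjTranspose_mul_self Z)
  set W := ((Matrix.isHermitian_conjTranspose_mul_self Z).eigenvectorUnitary :
    Matrix (Fin n) (Fin n) ℝ) with hW
  set lam := (Matrix.isHermitian_conjTranspose_mul_self Z).eigenvalues with hlam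
  have hsZ : Wᵀ * (Zᵀ * Z) * W = diagonal lam := by
    have h := spectral_real (Matrix.isHermitian_conjTranspose_mul_self Z)
    rw [show Zᵀ * Z = Zᴴ * Z by rw [conjTranspose_eq_transpose_of_trivial]]
    exact h
  have hsZ' : Zᵀ * Z = W * diagonal lam * Wᵀ := by
    rw [← hsZ]
    calc Zᵀ * Z = (W * Wᵀ) * (Zᵀ * Z) * (W * Wᵀ) := by rw [hW2, Matrix.one_mul, Matrix.mul_one]
      _ = W * (Wᵀ * (Zᵀ * Z) * W) * Wᵀ := by simp only [Matrix.mul_assoc]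
  set χ : Fin n → ℝ := fun i => if i ∈ T then 1 else 0 with hχ
  refine ⟨Z * (W * diagonal χ * Wᵀ), ?_, ?_⟩
  · -- rank bound
    calc (Z * (W * diagonal χ * Wᵀ)).rank ≤ (W * diagonal χ * Wᵀ).rank :=
          Matrix.rank_mul_le_right _ _
      _ ≤ (W * diagonal χ).rank := Matrix.rank_mul_le_left _ _
      _ ≤ (diagonal χ).rank := Matrix.rank_mul_le_right _ _
      _ = Fintype.card {i // χ i ≠ 0} := Matrix.rank_diagonal χ
      _ = T.card := by
          rw [Fintype.card_subtype]
          congr 1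
          ext i
          simp [hχ]
  · -- value bound
    have hrank : (Z * (W * diagonal χ * Wᵀ)).rank ≤ T.card := by
      calc (Z * (W * diagonal χ * Wᵀ)).rank ≤ (W * diagonal χ * Wᵀ).rank :=
            Matrix.rank_mul_le_right _ _
        _ ≤ (W * diagonal χ).rank := Matrix.rank_mul_le_left _ _
        _ ≤ (diagonal χ).rank := Matrix.rank_mul_le_right _ _
        _ = Fintype.card {i // χ i ≠ 0} := Matrix.rank_diagonal χ
        _ = T.card := by
            rw [Fintype.card_subtype]
            congr 1
            ext i
            simp [hχ]
    have hreg : regR (fmu μ) (Z * (W * diagonal χ * Wᵀ)) ≤ μ * T.card := by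
      refine (regR_le_rank _ hμ).trans ?_
      exact mul_le_mul_of_nonneg_left (by exact_mod_cast hrank) hμ
    have hfs : frobSq (Z * (W * diagonal χ * Wᵀ) - Z)
        = ∑ i ∈ Finset.univ \ T, lam i := by
      set ψ : Fin n → ℝ := fun i => χ i - 1 with hψ
      have h1 : diagonal ψ = diagonal χ - 1 := by
        rw [hψ, ← Matrix.diagonal_one, ← Matrix.diagonal_sub]
      have hsub : Z * (W * diagonal χ * Wᵀ) - Z = Z * (W * diagonal ψ * Wᵀ) := by
        rw [h1, Matrix.mul_sub W, Matrix.mul_one, Matrix.sub_mul, hW2, Matrix.mul_sub Z,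
          Matrix.mul_one]
      have sandwich : ∀ D E : Matrix (Fin n) (Fin n) ℝ,
          (W * D * Wᵀ) * (W * E * Wᵀ) = W * (D * E) * Wᵀ := by
        intro D E
        have h2 : (W * D * Wᵀ) * (W * E * Wᵀ) = W * (D * ((Wᵀ * W) * (E * Wᵀ))) := by
          simp only [Matrix.mul_assoc]
        rw [h2, hW1, Matrix.one_mul]
        simp only [Matrix.mul_assoc]
      have hGt : (W * diagonal ψ * Wᵀ)ᵀ = W * diagonal ψ * Wᵀ := by
        rw [Matrix.transpose_mul, Matrix.transpose_mul, Matrix.transpose_transpose,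
          Matrix.diagonal_transpose]
        simp only [Matrix.mul_assoc]
      have hkey : (Z * (W * diagonal ψ * Wᵀ))ᵀ * (Z * (W * diagonal ψ * Wᵀ))
          = W * (diagonal ψ * (diagonal lam * diagonal ψ)) * Wᵀ := by
        calc (Z * (W * diagonal ψ * Wᵀ))ᵀ * (Z * (W * diagonal ψ * Wᵀ))
            = (W * diagonal ψ * Wᵀ)ᵀ * ((Zᵀ * Z) * (W * diagonal ψ * Wᵀ)) := by
              rw [Matrix.transpose_mul]; simp only [Matrix.mul_assoc]
          _ = (W * diagonal ψ * Wᵀ) * ((W * diagonal lam * Wᵀ) * (W * diagonal ψ * Wᵀ)) := by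
              rw [hGt, hsZ']
          _ = (W * diagonal ψ * Wᵀ) * (W * (diagonal lam * diagonal ψ) * Wᵀ) := by
              rw [sandwich]
          _ = W * (diagonal ψ * (diagonal lam * diagonal ψ)) * Wᵀ := sandwich _ _
      rw [hsub, frobSq, hkey, Matrix.trace_mul_cycle, hW1, Matrix.one_mul,
        Matrix.diagonal_mul_diagonal, Matrix.diagonal_mul_diagonal, Matrix.trace_diagonal]
      have h3 : ∀ i, (ψ * (lam * ψ)) i = if i ∈ T then 0 else lam i := by
        intro i
        by_cases hi : i ∈ T <;> simp [hψ, hχ, hi] <;> ring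
      trans (∑ i, if i ∈ T then (0:ℝ) else lam i)
      · exact Finset.sum_congr rfl fun i _ => h3 i
      · rw [Finset.sum_ite, Finset.sum_const_zero, zero_add]
        congr 1
        ext i
        simp
    calc regR (fmu μ) (Z * (W * diagonal χ * Wᵀ)) + frobSq (Z * (W * diagonal χ * Wᵀ) - Z)
        ≤ μ * T.card + ∑ i ∈ Finset.univ \ T, lam i := by rw [hfs]; exact add_le_add_left hreg _

end Rest

lemma select {n : ℕ} (μ : ℝ) (w : Fin n → ℝ) (s : ℕ) (hs1 : 1 ≤ s)
    (hs : s ≤ (Finset.univ.filter fun i => μ < w i).card) :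
    ∃ (T : Finset (Fin n)) (θ : ℝ), T.card = s ∧ μ < θ ∧
      (∀ i ∈ T, θ ≤ w i) ∧ (∀ i ∉ T, w i ≤ θ) := by
  have hsn : s ≤ n := hs.trans (le_trans (Finset.card_filter_le _ _) (by simp))
  have hn : 0 < n := lt_of_lt_of_le hs1 hsn
  set g := Tuple.sort w with hg
  have hmono : Monotone (w ∘ g) := Tuple.monotone_sort w
  set p : Fin n := ⟨n - s, by omega⟩ with hp
  refine ⟨(Finset.Ici p).image g, w (g p), ?_, ?_, ?_, ?_⟩
  · rw [Finset.card_image_of_injective _ g.injective, Fin.card_Ici]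
    simp only [hp]
    omega
  · by_contra hle
    push_neg at hle
    have hsub : (Finset.univ.filter fun i => μ < w i) ⊆ (Finset.Ioi p).image g := by
      intro x hx
      refine Finset.mem_image.2 ⟨g.symm x, ?_, g.apply_symm_apply x⟩
      rw [Finset.mem_Ioi]
      by_contra hqle
      push_neg at hqle
      have h1 : w (g (g.symm x)) ≤ w (g p) := hmono hqle
      rw [g.apply_symm_apply] at h1
      have h2 : μ < w x := (Finset.mem_filter.1 hx).2
      linarith
    have hcard := Finset.card_le_card hsub
    rw [Finset.card_image_of_injective _ g.injective, Fin.card_Ioi] at hcard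
    simp only [hp] at hcard
    omega
  · intro i hi
    obtain ⟨q, hq, rfl⟩ := Finset.mem_image.1 hi
    exact hmono (Finset.mem_Ici.1 hq)
  · intro i hi
    have h1 : ¬ p ≤ g.symm i := fun hc =>
      hi (Finset.mem_image.2 ⟨g.symm i, Finset.mem_Ici.2 hc, g.apply_symm_apply i⟩)
    have h2 : w (g (g.symm i)) ≤ w (g p) := hmono (le_of_lt (lt_of_not_ge h1))
    rwa [g.apply_symm_apply] at h2

/-- For `f = f_μ` and `C_Z(X) = R(X) + ‖X − Z‖_F²`: if `X̄` minimizes `C_Z`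
over `{X : rank X ≤ k}` with `rank X̄ < k`, and no singular value of `Z` lies in
`[(1−δ)√μ, √μ/(1−δ)]` for some `δ ∈ [0,1)`, then `X̄` minimizes `C_Z` globally. -/
theorem low_rank_min_is_global_min {m n k : ℕ} (μ δ : ℝ) (hμ : 0 < μ)
    (hδ0 : 0 ≤ δ) (hδ1 : δ < 1)
    (Z Xbar : Matrix (Fin m) (Fin n) ℝ)
    (hmin : ∀ X : Matrix (Fin m) (Fin n) ℝ, X.rank ≤ k →
      regR (fmu μ) Xbar + frobSq (Xbar - Z) ≤ regR (fmu μ) X + frobSq (X - Z))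
    (hrank : Xbar.rank < k)
    (hgap : ∀ i, sVal Z i ∉ Set.Icc ((1 - δ) * Real.sqrt μ) (Real.sqrt μ / (1 - δ))) :
    ∀ X : Matrix (Fin m) (Fin n) ℝ,
      regR (fmu μ) Xbar + frobSq (Xbar - Z) ≤ regR (fmu μ) X + frobSq (X - Z) := by
  intro X
  have hμ' : (0:ℝ) ≤ μ := le_of_lt hμ
  by_cases hcase :
      (Finset.univ.filter fun i =>
        μ < (Matrix.isHermitian_conjTranspose_mul_self Z).eigenvalues i).card ≤ Xbar.rank
  · -- few large eigenvalues: Xbar attains the global lower bound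
    obtain ⟨Y, hYrank, hYval⟩ := candidate μ hμ' Z
      (Finset.univ.filter fun i =>
        μ < (Matrix.isHermitian_conjTranspose_mul_self Z).eigenvalues i)
    have h1 : regR (fmu μ) Xbar + frobSq (Xbar - Z) ≤ regR (fmu μ) Y + frobSq (Y - Z) :=
      hmin Y (le_trans hYrank (le_trans hcase (le_of_lt hrank)))
    -- the candidate value equals the global lower bound
    have h2 := master μ μ hμ' le_rfl Z X
    rw [sub_self, mul_zero, sub_zero] at h2
    -- μ * card S + ∑_{univ \ S} lam = ∑ lam - ∑ max (lam - μ) 0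
    set lam := (Matrix.isHermitian_conjTranspose_mul_self Z).eigenvalues with hlam
    set S := Finset.univ.filter fun i => μ < lam i with hS
    have h3 : μ * S.card + ∑ i ∈ Finset.univ \ S, lam i
        = ∑ i, lam i - ∑ i, max (lam i - μ) 0 := by
      have e1 : ∑ i, max (lam i - μ) 0 = ∑ i ∈ S, (lam i - μ) := by
        rw [← Finset.sum_subset (Finset.subset_univ S) (fun i _ hi => by
          have : ¬ μ < lam i := fun hc => hi (Finset.mem_filter.2 ⟨Finset.mem_univ i, hc⟩)
          exact max_eq_right (by linarith [not_lt.1 this]))]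
        exact Finset.sum_congr rfl fun i hi =>
          max_eq_left (by have := (Finset.mem_filter.1 hi).2; linarith)
      have e2 : ∑ i ∈ Finset.univ \ S, lam i = ∑ i, lam i - ∑ i ∈ S, lam i :=
        Finset.sum_sdiff_eq_sub (Finset.subset_univ S)
      have e3 : ∑ i ∈ S, (lam i - μ) = ∑ i ∈ S, lam i - S.card • μ := by
        rw [Finset.sum_sub_distrib, Finset.sum_const]
      rw [e1, e2, e3]
      simp only [nsmul_eq_mul]
      ring
    linarith
  · -- many large eigenvalues: contradiction with minimality of Xbar
    exfalso
    push_neg at hcase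
    obtain ⟨T, θ, hTcard, hθμ, hTlo, hThi⟩ := select μ
      (Matrix.isHermitian_conjTranspose_mul_self Z).eigenvalues (Xbar.rank + 1)
      (by omega) (by omega)
    obtain ⟨Y, hYrank, hYval⟩ := candidate μ hμ' Z T
    have h1 : regR (fmu μ) Xbar + frobSq (Xbar - Z) ≤ regR (fmu μ) Y + frobSq (Y - Z) :=
      hmin Y (le_trans hYrank (by omega))
    have h2 := master μ θ hμ' (le_of_lt hθμ) Z Xbar
    set lam := (Matrix.isHermitian_conjTranspose_mul_self Z).eigenvalues with hlam
    have h3 : ∑ i, max (lam i - θ) 0 = ∑ i ∈ T, lam i - T.card • θ := by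
      have e1 : ∑ i, max (lam i - θ) 0 = ∑ i ∈ T, (lam i - θ) := by
        rw [← Finset.sum_subset (Finset.subset_univ T) (fun i _ hi =>
          max_eq_right (by linarith [hThi i hi]))]
        exact Finset.sum_congr rfl fun i hi => max_eq_left (by linarith [hTlo i hi])
      rw [e1, Finset.sum_sub_distrib, Finset.sum_const]
    have h4 : ∑ i ∈ Finset.univ \ T, lam i = ∑ i, lam i - ∑ i ∈ T, lam i :=
      Finset.sum_sdiff_eq_sub (Finset.subset_univ T)
    rw [h3] at h2
    rw [h4] at hYval
    have h5 : (T.card : ℝ) = (Xbar.rank : ℝ) + 1 := by exact_mod_cast congrArg Nat.cast hTcard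
    have h6 : T.card • θ = (T.card : ℝ) * θ := by rw [nsmul_eq_mul]
    rw [h6, h5] at h2
    rw [h5] at hYval
    -- chain: lower bound on C(Xbar) exceeds the candidate upper bound
    nlinarith [h1, h2, hYval, hθμ]
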